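/- arXiv:1902.04908 — 3 statements merged into one kernel-verified Lean document; each statement's English description precedes it below -/
import Mathlib

section
/- Let G be a finite group of order n with identity e, and let a, b, c ∈ G, none equal to e, with a b c = e, such that a, b, c are pairwise distinct and a b ≠ب b a. Then the coefficient of the monomial x_e^{n-3} x_a x_b x_c in the group determinant Θ(G) equals n. -/
set_option linter.unusedSectionVars false

open MvPolynomial Finset

/-- The group determinant `Θ(G)` of a finite group `G`, as a multivariate polynomial over a
commutative ring `R` in independent commuting variables `x_g` (`g ∈ G`):
`Θ(G) = det((x_{g h⁻¹})_{g,h ∈ G})`. -/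
noncomputable def groupDet (R G : Type*) [CommRing R] [Group G] [Finite G] :
    MvPolynomial G R := by
  classical
  letI := Fintype.ofFinite G
  exact Matrix.det (Matrix.of fun g h : G => MvPolynomial.X (g * h⁻¹))

section Aux

lemma GD.det_irrel {n R : Type*} [CommRing R] (i1 i2 : Fintype n) (d1 d2 : DecidableEq n)
    (M : Matrix n n R) : @Matrix.det n d1 i1 R _ M = @Matrix.det n d2 i2 R _ M := by
  cases Subsingleton.elim i1 i2
  cases Subsingleton.elim d1 d2
  rfl

variable {G : Type*} [Group G] [DecidableEq G]

/-- The 3-cycle `g ↦ c*g ↦ b*c*g ↦ g`. -/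
def GD.cyc (b c g : G) : Equiv.Perm G := Equiv.swap g (b*c*g) * Equiv.swap g (c*g)

namespace GD

lemma hbc' {a b c : G} (habc : a * b * c = 1) : b * c = a⁻¹ :=
  eq_inv_of_mul_eq_one_right (by rw [← mul_assoc, habc])

lemma hab' {a b c : G} (habc : a * b * c = 1) : a * b = c⁻¹ :=
  eq_inv_of_mul_eq_one_left habc

lemma cg_ne {c : G} (hc : c ≠ 1) (g : G) : c * g ≠ g := by
  intro h; exact hc (by simpa using mul_right_cancel (h.trans (one_mul g).symm))

lemma bcg_ne {a b c : G} (ha : a ≠ 1) (habc : a * b * c = 1) (g : G) : b * c * g ≠ g := by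
  rw [hbc' habc]
  intro h
  have := mul_right_cancel (h.trans (one_mul g).symm)
  exact ha (by simpa using congrArg (·⁻¹) this)

lemma bcg_ne_cg {b c : G} (hb : b ≠ 1) (g : G) : b * c * g ≠ c * g := by
  rw [mul_assoc]
  intro h; exact hb (mul_right_cancel (h.trans (one_mul (c*g)).symm))

lemma cyc_apply_self {b c : G} (hb : b ≠ 1) (hc : c ≠ 1) (g : G) : cyc b c g g = c * g := by
  unfold cyc
  rw [Equiv.Perm.mul_apply, Equiv.swap_apply_left,
    Equiv.swap_apply_of_ne_of_ne (cg_ne hc g) (Ne.symm (bcg_ne_cg hb g))]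

lemma cyc_apply_cg (b c g : G) : cyc b c g (c * g) = b * c * g := by
  unfold cyc
  rw [Equiv.Perm.mul_apply, Equiv.swap_apply_right, Equiv.swap_apply_left]

lemma cyc_apply_bcg {a b c : G} (ha : a ≠ 1) (hb : b ≠ 1) (habc : a * b * c = 1) (g : G) :
    cyc b c g (b * c * g) = g := by
  unfold cyc
  rw [Equiv.Perm.mul_apply,
    Equiv.swap_apply_of_ne_of_ne (bcg_ne ha habc g) (bcg_ne_cg hb g),
    Equiv.swap_apply_right]

lemma cyc_apply_other {b c g x : G} (h1 : x ≠ g) (h2 : x ≠ c * g) (h3 : x ≠ b * c * g) :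
    cyc b c g x = x := by
  unfold cyc
  rw [Equiv.Perm.mul_apply, Equiv.swap_apply_of_ne_of_ne h1 h2,
    Equiv.swap_apply_of_ne_of_ne h1 h3]

lemma cyc_sign [Fintype G] {a b c : G} (ha : a ≠ 1) (hc : c ≠ 1) (habc : a * b * c = 1) (g : G) :
    Equiv.Perm.sign (cyc b c g) = 1 := by
  unfold cyc
  rw [Equiv.Perm.sign_mul, Equiv.Perm.sign_swap (Ne.symm (bcg_ne ha habc g)),
    Equiv.Perm.sign_swap (Ne.symm (cg_ne hc g))]
  simp

lemma cyc_injective {a b c : G} (ha : a ≠ 1) (hb : b ≠ 1) (hc : c ≠ 1) (habc : a * b * c = 1)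
    (hac : a ≠ c) (hbcne : b ≠ c) : Function.Injective (cyc b c : G → Equiv.Perm G) := by
  intro g1 g2 h
  by_contra hne
  have h1 : cyc b c g2 g1 = c * g1 := by rw [← h, cyc_apply_self hb hc]
  by_cases e2 : g1 = c * g2
  · rw [e2, cyc_apply_cg] at h1
    have h2 : b * c = c * c := mul_right_cancel (h1.trans (mul_assoc c c g2).symm)
    exact hbcne (mul_right_cancel h2)
  · by_cases e3 : g1 = b * c * g2
    · rw [e3, cyc_apply_bcg ha hb habc] at h1
      have h2 : c * (b * c) * g2 = g2 := by rw [mul_assoc]; exact h1.symm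
      have h3 : b * c = c⁻¹ := eq_inv_of_mul_eq_one_right (mul_eq_right.mp h2)
      rw [hbc' habc] at h3
      exact hac (inv_injective h3)
    · rw [cyc_apply_other hne e2 e3] at h1
      exact cg_ne hc g1 h1.symm

lemma T_cyc [Fintype G] {a b c : G} (ha : a ≠ 1) (hb : b ≠ 1) (hc : c ≠ 1)
    (habc : a * b * c = 1) (g : G) :
    (∑ i : G, Finsupp.single ((cyc b c g) i * i⁻¹) (1:ℕ)) =
      Finsupp.single (1 : G) (Fintype.card G - 3) +
        Finsupp.single a 1 + Finsupp.single b 1 + Finsupp.single c 1 := by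
  have hS1 : (c*g) ≠ g := cg_ne hc g
  have hS2 : (b*c*g) ≠ g := bcg_ne ha habc g
  have hS3 : (b*c*g) ≠ c*g := bcg_ne_cg hb g
  have v1 : (cyc b c g) g * g⁻¹ = c := by rw [cyc_apply_self hb hc]; group
  have v2 : (cyc b c g) (c*g) * (c*g)⁻¹ = b := by rw [cyc_apply_cg]; group
  have v3 : (cyc b c g) (b*c*g) * (b*c*g)⁻¹ = a := by rw [cyc_apply_bcg ha hb habc, hbc' habc]; group
  set S : Finset G := {g, c*g, b*c*g} with hSdef
  have hgS : g ∉ ({c*g, b*c*g} : Finset G) := by simp [Ne.symm hS1, Ne.symm hS2]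
  have hcgS : (c*g) ∉ ({b*c*g} : Finset G) := by simp [Ne.symm hS3]
  have hcard : S.card = 3 := by
    rw [hSdef, card_insert_of_notMem hgS, card_insert_of_notMem hcgS, card_singleton]
  rw [← Finset.sum_sdiff (Finset.subset_univ S)]
  have e1 : ∀ i ∈ univ \ S, Finsupp.single ((cyc b c g) i * i⁻¹) (1:ℕ)
      = Finsupp.single (1:G) 1 := by
    intro i hi
    simp only [hSdef, mem_sdiff, mem_insert, mem_singleton] at hi
    push_neg at hi
    obtain ⟨-, h1, h2, h3⟩ := hi
    rw [cyc_apply_other h1 h2 h3]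
    simp
  rw [Finset.sum_congr rfl e1, Finset.sum_const, Finset.card_sdiff_of_subset (subset_univ S), hcard,
    Finset.card_univ]
  rw [hSdef, Finset.sum_insert hgS, Finset.sum_insert hcgS, Finset.sum_singleton, v1, v2, v3]
  rw [Finsupp.smul_single]
  simp only [smul_eq_mul, mul_one]
  abel

lemma T_apply [Fintype G] (σ : Equiv.Perm G) (v : G) :
    (∑ i : G, Finsupp.single (σ i * i⁻¹) (1:ℕ)) v
      = (univ.filter fun i => σ i * i⁻¹ = v).card := by
  rw [Finsupp.finset_sum_apply]
  rw [Finset.card_filter]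
  refine Finset.sum_congr rfl fun i _ => ?_
  rw [Finsupp.single_apply]

lemma exists_cyc [Fintype G] {a b c : G} (ha : a ≠ 1) (hb : b ≠ 1) (hc : c ≠ 1)
    (habc : a * b * c = 1) (hab : a ≠ b) (hac : a ≠ c) (hbcne : b ≠ c)
    (hcomm : a * b ≠ b * a) (σ : Equiv.Perm G)
    (h : (∑ i : G, Finsupp.single (σ i * i⁻¹) (1:ℕ)) =
      Finsupp.single (1 : G) (Fintype.card G - 3) +
        Finsupp.single a 1 + Finsupp.single b 1 + Finsupp.single c 1) :
    ∃ g, σ = cyc b c g := by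
  set μ : G →₀ ℕ := Finsupp.single (1 : G) (Fintype.card G - 3) +
        Finsupp.single a 1 + Finsupp.single b 1 + Finsupp.single c 1 with hμ
  have hcount : ∀ v, (univ.filter fun i => σ i * i⁻¹ = v).card = μ v := fun v => by
    rw [← T_apply, h]
  have μa : μ a = 1 := by
    simp [hμ, Finsupp.add_apply, Finsupp.single_apply, Ne.symm ha, Ne.symm hab, Ne.symm hac]
  have μb : μ b = 1 := by
    simp [hμ, Finsupp.add_apply, Finsupp.single_apply, Ne.symm hb, hab, Ne.symm hbcne]
  have μc : μ c = 1 := by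
    simp [hμ, Finsupp.add_apply, Finsupp.single_apply, Ne.symm hc, hac, hbcne]
  have μother : ∀ v : G, v ≠ 1 → v ≠ a → v ≠ b → v ≠ c → μ v = 0 := by
    intro v h1 h2 h3 h4
    simp [hμ, Finsupp.add_apply, Finsupp.single_apply, Ne.symm h1, Ne.symm h2, Ne.symm h3,
      Ne.symm h4]
  -- unique points with multipliers a, b, c
  obtain ⟨p, hp⟩ : ∃ p, (univ.filter fun i => σ i * i⁻¹ = a) = {p} :=
    Finset.card_eq_one.mp (by rw [hcount a, μa])
  obtain ⟨q, hq⟩ : ∃ q, (univ.filter fun i => σ i * i⁻¹ = b) = {q} :=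
    Finset.card_eq_one.mp (by rw [hcount b, μb])
  obtain ⟨r, hr⟩ : ∃ r, (univ.filter fun i => σ i * i⁻¹ = c) = {r} :=
    Finset.card_eq_one.mp (by rw [hcount c, μc])
  have hpa : σ p * p⁻¹ = a := by
    have := Finset.mem_singleton_self p; rw [← hp] at this; exact (Finset.mem_filter.mp this).2
  have hqb : σ q * q⁻¹ = b := by
    have := Finset.mem_singleton_self q; rw [← hq] at this; exact (Finset.mem_filter.mp this).2
  have hrc : σ r * r⁻¹ = c := by
    have := Finset.mem_singleton_self r; rw [← hr] at this; exact (Finset.mem_filter.mp this).2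
  have hpu : ∀ i, σ i * i⁻¹ = a → i = p := fun i hi => by
    have h2 : i ∈ univ.filter (fun j => σ j * j⁻¹ = a) :=
      Finset.mem_filter.mpr ⟨Finset.mem_univ i, hi⟩
    rw [hp] at h2; exact Finset.mem_singleton.mp h2
  have hqu : ∀ i, σ i * i⁻¹ = b → i = q := fun i hi => by
    have h2 : i ∈ univ.filter (fun j => σ j * j⁻¹ = b) :=
      Finset.mem_filter.mpr ⟨Finset.mem_univ i, hi⟩
    rw [hq] at h2; exact Finset.mem_singleton.mp h2
  have hru : ∀ i, σ i * i⁻¹ = c → i = r := fun i hi => by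
    have h2 : i ∈ univ.filter (fun j => σ j * j⁻¹ = c) :=
      Finset.mem_filter.mpr ⟨Finset.mem_univ i, hi⟩
    rw [hr] at h2; exact Finset.mem_singleton.mp h2
  have hp2 : σ p = a * p := mul_inv_eq_iff_eq_mul.mp hpa
  have hq2 : σ q = b * q := mul_inv_eq_iff_eq_mul.mp hqb
  have hr2 : σ r = c * r := mul_inv_eq_iff_eq_mul.mp hrc
  have hpq : p ≠ q := fun e => hab ((e ▸ hpa : σ q * q⁻¹ = a).symm.trans hqb)
  have hpr : p ≠ r := fun e => hac ((e ▸ hpa : σ r * r⁻¹ = a).symm.trans hrc)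
  have hqr : q ≠ r := fun e => hbcne ((e ▸ hqb : σ r * r⁻¹ = b).symm.trans hrc)
  have hσpp : σ p ≠ p := hp2 ▸ cg_ne ha p
  have hσqq : σ q ≠ q := hq2 ▸ cg_ne hb q
  have hσrr : σ r ≠ r := hr2 ▸ cg_ne hc r
  have hfix : ∀ i, i ≠ p → i ≠ q → i ≠ r → σ i = i := by
    intro i hip hiq hir
    have hv1 : σ i * i⁻¹ = 1 := by
      by_contra hne
      have hva : σ i * i⁻¹ ≠ a := fun e => hip (hpu i e)
      have hvb : σ i * i⁻¹ ≠ b := fun e => hiq (hqu i e)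
      have hvc : σ i * i⁻¹ ≠ c := fun e => hir (hru i e)
      have h0 : (univ.filter fun j => σ j * j⁻¹ = σ i * i⁻¹).card = 0 := by
        rw [hcount _, μother _ hne hva hvb hvc]
      have : i ∈ (univ.filter fun j => σ j * j⁻¹ = σ i * i⁻¹) :=
        Finset.mem_filter.mpr ⟨Finset.mem_univ i, rfl⟩
      rw [Finset.card_eq_zero.mp h0] at this
      exact absurd this (Finset.notMem_empty i)
    exact mul_inv_eq_one.mp hv1
  have hperm : ∀ x, (x = p ∨ x = q ∨ x = r) → (σ x = p ∨ σ x = q ∨ σ x = r) := by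
    intro x hx
    by_contra hcon
    push_neg at hcon
    obtain ⟨n1, n2, n3⟩ := hcon
    have : σ x = x := σ.injective (hfix (σ x) n1 n2 n3)
    rcases hx with rfl | rfl | rfl
    · exact hσpp this
    · exact hσqq this
    · exact hσrr this
  -- σ p = q or σ p = r
  have hσp : σ p = q ∨ σ p = r := by
    rcases hperm p (Or.inl rfl) with e | e | e
    · exact absurd e hσpp
    · exact Or.inl e
    · exact Or.inr e
  rcases hσp with hσp | hσp
  · -- σ p = q, leads to cba = 1, contradiction with noncommutativity
    exfalso
    have hσq : σ q = r := by
      rcases hperm q (Or.inr (Or.inl rfl)) with e | e | e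
      · -- σ q = p : then σ r is stuck
        exfalso
        rcases hperm r (Or.inr (Or.inr rfl)) with f | f | f
        · exact hqr (σ.injective (e.trans f.symm))
        · exact hpr (σ.injective (hσp.trans f.symm))
        · exact hσrr f
      · exact absurd e hσqq
      · exact e
    have hσr : σ r = p := by
      rcases hperm r (Or.inr (Or.inr rfl)) with e | e | e
      · exact e
      · exact absurd (σ.injective (hσp.trans e.symm)) hpr
      · exact absurd e hσrr
    -- q = a p, r = b q, p = c r ⇒ c * (b * a) = 1 ⇒ b * a = c⁻¹ = a * b
    have e1 : q = a * p := hσp.symm.trans hp2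
    have e2 : r = b * q := hσq.symm.trans hq2
    have e3 : p = c * r := hσr.symm.trans hr2
    have : c * (b * a) * p = p := by
      rw [mul_assoc, mul_assoc, ← e1, ← e2, ← e3]
    have hba : b * a = c⁻¹ := eq_inv_of_mul_eq_one_right (mul_eq_right.mp this)
    exact hcomm ((hab' habc).trans hba.symm)
  · -- σ p = r : the 3-cycle case
    have hσr : σ r = q := by
      rcases hperm r (Or.inr (Or.inr rfl)) with e | e | e
      · -- σ r = p : then σ q is stuck
        exfalso
        rcases hperm q (Or.inr (Or.inl rfl)) with f | f | f
        · exact hqr (σ.injective (f.trans e.symm))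
        · exact hσqq f
        · exact hpq (σ.injective (hσp.trans f.symm))
      · exact e
      · exact absurd e hσrr
    have hσq : σ q = p := by
      rcases hperm q (Or.inr (Or.inl rfl)) with e | e | e
      · exact e
      · exact absurd e hσqq
      · exact absurd (σ.injective (hσp.trans e.symm)) hpq
    have e1 : r = a * p := hσp.symm.trans hp2
    have e2 : q = c * r := hσr.symm.trans hr2
    have e3 : p = b * q := hσq.symm.trans hq2
    have e4 : p = b * c * r := by rw [mul_assoc, ← e2]; exact e3
    refine ⟨r, Equiv.ext fun x => ?_⟩
    by_cases hx1 : x = r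
    · subst hx1
      rw [cyc_apply_self hb hc, hr2]
    · by_cases hx2 : x = q
      · subst hx2
        rw [e2, cyc_apply_cg, ← e4, ← e2, hσq]
      · by_cases hx3 : x = p
        · subst hx3
          conv_rhs => rw [e4]
          rw [cyc_apply_bcg ha hb habc]
          exact hσp
        · rw [cyc_apply_other hx1 (fun e => hx2 (e.trans e2.symm))
            (fun e => hx3 (e.trans e4.symm)), hfix x hx3 hx2 hx1]

end GD

end Aux

/-- If `a, b, c ≠ e`, `a * b * c = e`, `a, b, c` pairwise distinct and `a * b ≠ b * a`, then the
coefficient of the monomial `x_e^{n-3} x_a x_b x_c` in `Θ(G)` equals `n = |G|`. -/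
theorem coeff_groupDet_distinct_noncomm {G : Type*} [Group G] [Fintype G]
    (a b c : G) (ha : a ≠ 1) (hb : b ≠ 1) (hc : c ≠ 1) (habc : a * b * c = 1)
    (hab : a ≠ b) (hac : a ≠ c) (hbc : b ≠ c) (hcomm : a * b ≠ b * a) :
    MvPolynomial.coeff
      (Finsupp.single (1 : G) (Fintype.card G - 3) +
        Finsupp.single a 1 + Finsupp.single b 1 + Finsupp.single c 1)
      (groupDet ℂ G) = (Fintype.card G : ℂ) := by
  classical
  set μ : G →₀ ℕ := Finsupp.single (1 : G) (Fintype.card G - 3) +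
        Finsupp.single a 1 + Finsupp.single b 1 + Finsupp.single c 1 with hμ
  have hdet : groupDet ℂ G
      = Matrix.det (Matrix.of fun g h : G => (MvPolynomial.X (g * h⁻¹) : MvPolynomial G ℂ)) := by
    unfold groupDet
    exact GD.det_irrel _ _ _ _ _
  have hmain : MvPolynomial.coeff μ (groupDet ℂ G)
      = ∑ σ ∈ (univ : Finset (Equiv.Perm G)).filter
          (fun σ => (∑ i : G, Finsupp.single (σ i * i⁻¹) 1) = μ),
          ((Equiv.Perm.sign σ : ℤ) : ℂ) := by
    rw [hdet, Matrix.det_apply, coeff_sum, Finset.sum_filter]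
    refine Finset.sum_congr rfl fun σ _ => ?_
    have hprod : (∏ i : G,
        (Matrix.of fun g h : G => (MvPolynomial.X (g * h⁻¹) : MvPolynomial G ℂ)) (σ i) i)
        = monomial (∑ i : G, Finsupp.single (σ i * i⁻¹) 1) 1 := by
      rw [monomial_sum_one]
      refine Finset.prod_congr rfl fun i _ => ?_
      simp [Matrix.of_apply, X]
    rw [hprod, coeff_smul, coeff_monomial]
    by_cases hT : (∑ i : G, Finsupp.single (σ i * i⁻¹) 1) = μ
    · simp [hT]
      rw [Units.smul_def, zsmul_eq_mul, mul_one]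
    · simp [hT]
  rw [hmain]
  have hset : (univ : Finset (Equiv.Perm G)).filter
      (fun σ => (∑ i : G, Finsupp.single (σ i * i⁻¹) 1) = μ)
      = Finset.image (GD.cyc b c) univ := by
    ext σ
    simp only [Finset.mem_filter, Finset.mem_univ, true_and, Finset.mem_image]
    constructor
    · intro hT
      obtain ⟨g, hg⟩ := GD.exists_cyc ha hb hc habc hab hac hbc hcomm σ (hT.trans hμ)
      exact ⟨g, hg.symm⟩
    · rintro ⟨g, rfl⟩
      rw [hμ]
      exact GD.T_cyc ha hb hc habc g
  rw [hset, Finset.sum_image (fun x _ y _ h => GD.cyc_injective ha hb hc habc hac hbc h)]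
  have hone : ∀ g ∈ (univ : Finset G), ((Equiv.Perm.sign (GD.cyc b c g) : ℤ) : ℂ) = 1 :=
    fun g _ => by rw [GD.cyc_sign ha hc habc]; simp
  rw [Finset.sum_congr rfl hone, Finset.sum_const, Finset.card_univ]
  simp
end

section
/- Let G be a finite group of order n with identity e, and let a, b, c ∈ G, none equal to e, with a b c = e, such that a, b, c are pairwise distinct and a b = b a. Then the coefficient of the monomial x_e^{n-3} x_a x_b x_c in the group determinant Θ(G) equals 2n. -/
set_option linter.unusedSectionVars false
set_option maxHeartbeats 1000000

open MvPolynomial Equiv Finset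

section Aux

variable {G : Type*} [Group G] [Fintype G] [DecidableEq G]

/-- The 3-cycle `x → y → z → x`. -/
def cyc3 (x y z : G) : Equiv.Perm G := Equiv.swap x z * Equiv.swap x y

lemma cyc3_fst {x y z : G} (hxy : x ≠ y) (hyz : y ≠ z) : cyc3 x y z x = y := by
  rw [cyc3, Equiv.Perm.mul_apply, Equiv.swap_apply_left,
    Equiv.swap_apply_of_ne_of_ne hxy.symm hyz]

lemma cyc3_snd {x y z : G} : cyc3 x y z y = z := by
  rw [cyc3, Equiv.Perm.mul_apply, Equiv.swap_apply_right, Equiv.swap_apply_left]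

lemma cyc3_thd {x y z : G} (hyz : y ≠ z) (hxz : x ≠ z) : cyc3 x y z z = x := by
  rw [cyc3, Equiv.Perm.mul_apply, Equiv.swap_apply_of_ne_of_ne hxz.symm hyz.symm,
    Equiv.swap_apply_right]

lemma cyc3_other {x y z w : G} (hx : w ≠ x) (hy : w ≠ y) (hz : w ≠ z) : cyc3 x y z w = w := by
  rw [cyc3, Equiv.Perm.mul_apply, Equiv.swap_apply_of_ne_of_ne hx hy,
    Equiv.swap_apply_of_ne_of_ne hx hz]

lemma sign_cyc3 {x y z : G} (hxy : x ≠ y) (hxz : x ≠ z) :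
    Equiv.Perm.sign (cyc3 x y z) = 1 := by
  rw [cyc3, map_mul, Equiv.Perm.sign_swap hxz, Equiv.Perm.sign_swap hxy]
  decide

/-- The exponent vector of the term of the group determinant coming from `σ`. -/
noncomputable def permDeg (σ : Equiv.Perm G) : G →₀ ℕ := ∑ g : G, Finsupp.single (σ g * g⁻¹) 1

lemma permDeg_apply (σ : Equiv.Perm G) (k : G) :
    permDeg σ k = (univ.filter fun g => σ g * g⁻¹ = k).card := by
  rw [permDeg, Finset.card_filter, Finsupp.finset_sum_apply]
  exact Finset.sum_congr rfl fun g _ => by rw [Finsupp.single_apply]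

lemma permDeg_cyc3 {x y z : G} (hxy : x ≠ y) (hyz : y ≠ z) (hxz : x ≠ z) :
    permDeg (cyc3 x y z) =
      Finsupp.single (1 : G) (Fintype.card G - 3) + Finsupp.single (y * x⁻¹) 1 +
        Finsupp.single (z * y⁻¹) 1 + Finsupp.single (x * z⁻¹) 1 := by
  have hsub : ({x, y, z} : Finset G) ⊆ univ := subset_univ _
  have hcard3 : ({x, y, z} : Finset G).card = 3 := by
    rw [Finset.card_insert_of_notMem (by simp [hxy, hxz]),
      Finset.card_insert_of_notMem (by simp [hyz]), Finset.card_singleton]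
  rw [permDeg, ← Finset.sum_sdiff hsub]
  have h1 : ∑ g ∈ univ \ {x, y, z}, Finsupp.single (cyc3 x y z g * g⁻¹) 1 =
      Finsupp.single (1 : G) (Fintype.card G - 3) := by
    have hconst : ∀ g ∈ univ \ ({x, y, z} : Finset G),
        Finsupp.single (cyc3 x y z g * g⁻¹) (1 : ℕ) = Finsupp.single (1 : G) 1 := by
      intro g hg
      simp only [mem_sdiff, mem_insert, mem_singleton, not_or] at hg
      rw [cyc3_other hg.2.1 hg.2.2.1 hg.2.2.2, mul_inv_cancel]
    rw [Finset.sum_congr rfl hconst, Finset.sum_const, Finset.card_sdiff_of_subset hsub,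
      Finset.card_univ, hcard3, Finsupp.smul_single, smul_eq_mul, mul_one]
  have h2 : ∑ g ∈ ({x, y, z} : Finset G), Finsupp.single (cyc3 x y z g * g⁻¹) 1 =
      Finsupp.single (y * x⁻¹) 1 + (Finsupp.single (z * y⁻¹) 1 + Finsupp.single (x * z⁻¹) 1) := by
    rw [show ({x, y, z} : Finset G) = insert x (insert y {z}) from rfl,
      Finset.sum_insert (by simp [hxy, hxz]), Finset.sum_insert (by simp [hyz]),
      Finset.sum_singleton, cyc3_fst hxy hyz, cyc3_snd, cyc3_thd hyz hxz]
  rw [h1, h2, ← add_assoc, ← add_assoc]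

lemma prod_X_perm (σ : Equiv.Perm G) :
    (∏ g : G, (X (σ g * g⁻¹) : MvPolynomial G ℂ)) = monomial (permDeg σ) 1 := by
  rw [permDeg]
  induction (univ : Finset G) using Finset.cons_induction with
  | empty => simp
  | cons a s ha ih =>
      rw [Finset.prod_cons, Finset.sum_cons, ih, X, monomial_mul, one_mul]

lemma coeff_groupDet (m : G →₀ ℕ) :
    coeff m (groupDet ℂ G) =
      ∑ σ : Equiv.Perm G, ((Equiv.Perm.sign σ : ℤ) : ℂ) * (if permDeg σ = m then 1 else 0) := by
  have h1 : groupDet ℂ G =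
      ∑ σ : Equiv.Perm G, ((Equiv.Perm.sign σ : ℤ) : MvPolynomial G ℂ) *
        ∏ g : G, X (σ g * g⁻¹) := by
    rw [groupDet,
      Subsingleton.elim (fun a b => Classical.propDecidable (a = b)) ‹DecidableEq G›,
      Subsingleton.elim (Fintype.ofFinite G) ‹Fintype G›, Matrix.det_apply']
    rfl
  rw [h1, coeff_sum]
  refine Finset.sum_congr rfl fun σ _ => ?_
  rw [prod_X_perm, show ((Equiv.Perm.sign σ : ℤ) : MvPolynomial G ℂ) =
      C ((Equiv.Perm.sign σ : ℤ) : ℂ) from rfl,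
    coeff_C_mul, coeff_monomial]

end Aux

/-- If `a, b, c ≠ e`, `a * b * c = e`, `a, b, c` pairwise distinct and `a * b = b * a`, then the
coefficient of the monomial `x_e^{n-3} x_a x_b x_c` in `Θ(G)` equals `2n` where `n = |G|`. -/
theorem coeff_groupDet_distinct_comm {G : Type*} [Group G] [Fintype G]
    (a b c : G) (ha : a ≠ 1) (hb : b ≠ 1) (hc : c ≠ 1) (habc : a * b * c = 1)
    (hab : a ≠ b) (hac : a ≠ c) (hbc : b ≠ c) (hcomm : a * b = b * a) :
    MvPolynomial.coeff
      (Finsupp.single (1 : G) (Fintype.card G - 3) +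
        Finsupp.single a 1 + Finsupp.single b 1 + Finsupp.single c 1)
      (groupDet ℂ G) = 2 * (Fintype.card G : ℂ) := by
  letI : DecidableEq G := Classical.decEq G
  set m : G →₀ ℕ := Finsupp.single (1 : G) (Fintype.card G - 3) +
        Finsupp.single a 1 + Finsupp.single b 1 + Finsupp.single c 1 with hm
  -- basic group identities
  have hc_eq : c = (a * b)⁻¹ := (inv_eq_of_mul_eq_one_right habc).symm
  have hca_eq : c * a = b⁻¹ := by rw [hc_eq, mul_inv_rev]; simp [mul_assoc]
  have hba1 : b * a ≠ 1 := by
    rw [← hcomm]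
    intro h
    exact hc (by rw [hc_eq, h, inv_one])
  have hca1 : c * a ≠ 1 := by rw [hca_eq]; simpa using hb
  have hcba1 : c * (b * a) = 1 := by rw [← hcomm, hc_eq]; group
  have hbca1 : b * (c * a) = 1 := by rw [hca_eq]; simp
  -- distinctness of the three moved points
  have hd1 : ∀ g : G, g ≠ a * g := fun g h => ha (right_eq_mul.mp h)
  have hd2t : ∀ g : G, a * g ≠ b * (a * g) := fun g h => hb (right_eq_mul.mp h)
  have hd3t : ∀ g : G, g ≠ b * (a * g) := fun g h =>
    hba1 (right_eq_mul.mp (show g = (b * a) * g by rwa [mul_assoc]))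
  have hd2f : ∀ g : G, a * g ≠ c * (a * g) := fun g h => hc (right_eq_mul.mp h)
  have hd3f : ∀ g : G, g ≠ c * (a * g) := fun g h =>
    hca1 (right_eq_mul.mp (show g = (c * a) * g by rwa [mul_assoc]))
  -- the parametrizing map
  set Φ : G × Bool → Equiv.Perm G := fun p =>
    if p.2 then cyc3 p.1 (a * p.1) (b * (a * p.1)) else cyc3 p.1 (a * p.1) (c * (a * p.1))
    with hΦ
  -- m values
  have hma : m a = 1 := by
    simp only [hm, Finsupp.add_apply, Finsupp.single_apply, if_pos rfl,
      if_neg (Ne.symm ha), if_neg (Ne.symm hab), if_neg (Ne.symm hac)]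
    norm_num
  have hmb : m b = 1 := by
    simp only [hm, Finsupp.add_apply, Finsupp.single_apply, if_pos rfl,
      if_neg (Ne.symm hb), if_neg hab, if_neg (Ne.symm hbc)]
    norm_num
  have hmc : m c = 1 := by
    simp only [hm, Finsupp.add_apply, Finsupp.single_apply, if_pos rfl,
      if_neg (Ne.symm hc), if_neg hac, if_neg hbc]
    norm_num
  have hmother : ∀ k : G, k ≠ 1 → k ≠ a → k ≠ b → k ≠ c → m k = 0 := by
    intro k h1 h2 h3 h4
    simp only [hm, Finsupp.add_apply, Finsupp.single_apply, if_neg (Ne.symm h1),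
      if_neg (Ne.symm h2), if_neg (Ne.symm h3), if_neg (Ne.symm h4), add_zero]
  -- forward: each Φ p has degree vector m
  have hΦdeg : ∀ p : G × Bool, permDeg (Φ p) = m := by
    rintro ⟨g, β⟩
    have e1 : (a * g) * g⁻¹ = a := by group
    cases β
    · -- false case : cyc3 g (a*g) (c*(a*g))
      have e2 : (c * (a * g)) * (a * g)⁻¹ = c := by group
      have e3 : g * (c * (a * g))⁻¹ = b := by
        have : g * (c * (a * g))⁻¹ = (c * a)⁻¹ := by group
        rw [this, hca_eq, inv_inv]
      show permDeg (cyc3 g (a * g) (c * (a * g))) = m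
      rw [permDeg_cyc3 (hd1 g) (hd2f g) (hd3f g), e1, e2, e3, hm, add_right_comm]
    · -- true case : cyc3 g (a*g) (b*(a*g))
      have e2 : (b * (a * g)) * (a * g)⁻¹ = b := by group
      have e3 : g * (b * (a * g))⁻¹ = c := by
        have h' : g * (b * (a * g))⁻¹ = (b * a)⁻¹ := by group
        rw [h', ← hcomm, ← hc_eq]
      show permDeg (cyc3 g (a * g) (b * (a * g))) = m
      rw [permDeg_cyc3 (hd1 g) (hd2t g) (hd3t g), e1, e2, e3, hm]
  -- counting facts for any σ with the right degree vector
  have hcount : ∀ σ : Equiv.Perm G, permDeg σ = m →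
      ∀ k : G, (univ.filter fun g => σ g * g⁻¹ = k).card = m k := by
    intro σ hσ k; rw [← permDeg_apply, hσ]
  have huniq : ∀ σ : Equiv.Perm G, permDeg σ = m → ∀ k : G, m k = 1 →
      ∀ g h : G, σ g * g⁻¹ = k → σ h * h⁻¹ = k → g = h := by
    intro σ hσ k hk g h hg hh
    have h1 : (univ.filter fun g => σ g * g⁻¹ = k).card ≤ 1 := by rw [hcount σ hσ, hk]
    exact Finset.card_le_one.mp h1 g (by simp [hg]) h (by simp [hh])
  have hlab : ∀ σ : Equiv.Perm G, permDeg σ = m → ∀ g : G, σ g ≠ g →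
      σ g * g⁻¹ = a ∨ σ g * g⁻¹ = b ∨ σ g * g⁻¹ = c := by
    intro σ hσ g hg
    by_contra hcon
    push_neg at hcon
    have hk1 : σ g * g⁻¹ ≠ 1 := fun h => hg (by rwa [mul_inv_eq_one] at h)
    have h0 := hcount σ hσ (σ g * g⁻¹)
    rw [hmother _ hk1 hcon.1 hcon.2.1 hcon.2.2] at h0
    have hpos : 0 < (univ.filter fun h => σ h * h⁻¹ = σ g * g⁻¹).card :=
      Finset.card_pos.mpr ⟨g, by simp⟩
    omega
  have hexists : ∀ σ : Equiv.Perm G, permDeg σ = m → ∀ k : G, m k = 1 →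
      ∃ g : G, σ g * g⁻¹ = k := by
    intro σ hσ k hk
    have h1 : (univ.filter fun g => σ g * g⁻¹ = k).card = 1 := by rw [hcount σ hσ, hk]
    obtain ⟨g, hg⟩ := Finset.card_eq_one.mp h1
    refine ⟨g, ?_⟩
    have := hg ▸ Finset.mem_singleton_self g
    exact (Finset.mem_filter.mp this).2
  -- Φ applied to first coordinate
  have hΦfst : ∀ (g : G) (β : Bool), Φ (g, β) g = a * g := by
    intro g β
    cases β
    · show cyc3 g (a * g) (c * (a * g)) g = a * g
      exact cyc3_fst (hd1 g) (hd2f g)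
    · show cyc3 g (a * g) (b * (a * g)) g = a * g
      exact cyc3_fst (hd1 g) (hd2t g)
  -- injectivity of Φ
  have hΦinj : ∀ p q : G × Bool, Φ p = Φ q → p = q := by
    rintro ⟨g, β⟩ ⟨g', β'⟩ h
    have e1 : Φ (g, β) g * g⁻¹ = a := by rw [hΦfst g β]; group
    have e2 : Φ (g, β) g' * g'⁻¹ = a := by rw [h, hΦfst g' β']; group
    have hgg' : g = g' := huniq _ (hΦdeg (g, β)) a hma g g' e1 e2
    subst hgg'
    have hββ' : β = β' := by
      by_contra hne
      have hval : Φ (g, true) (a * g) = Φ (g, false) (a * g) := by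
        cases β <;> cases β' <;> first
          | exact absurd rfl hne
          | rw [h]
          | rw [← h]
      have : b * (a * g) = c * (a * g) := by
        have h1 : Φ (g, true) (a * g) = b * (a * g) := cyc3_snd
        have h2 : Φ (g, false) (a * g) = c * (a * g) := cyc3_snd
        rw [← h1, ← h2, hval]
      exact hbc (mul_right_cancel this)
    rw [hββ']
  -- classification: any σ with degree vector m is in the image of Φ
  have hclass : ∀ σ : Equiv.Perm G, permDeg σ = m → ∃ p : G × Bool, Φ p = σ := by
    intro σ hσ
    obtain ⟨g, hg⟩ := hexists σ hσ a hma
    have hσg : σ g = a * g := by rwa [mul_inv_eq_iff_eq_mul] at hg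
    have hne1 : σ (a * g) ≠ a * g := by
      intro h
      exact hd1 g (σ.injective (hσg.trans h.symm))
    have hlab1 : σ (a * g) * (a * g)⁻¹ = b ∨ σ (a * g) * (a * g)⁻¹ = c := by
      rcases hlab σ hσ (a * g) hne1 with h | h | h
      · exact absurd (huniq σ hσ a hma (a * g) g h hg) (hd1 g).symm
      · exact Or.inl h
      · exact Or.inr h
    rcases hlab1 with hcase | hcase
    · -- σ (a*g) = b*(a*g) : σ = Φ (g, true)
      have hσh1 : σ (a * g) = b * (a * g) := by rwa [mul_inv_eq_iff_eq_mul] at hcase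
      have hne2 : σ (b * (a * g)) ≠ b * (a * g) := by
        intro h
        exact hd2t g (σ.injective (hσh1.trans h.symm))
      have hlab2 : σ (b * (a * g)) * (b * (a * g))⁻¹ = c := by
        rcases hlab σ hσ (b * (a * g)) hne2 with h | h | h
        · exact absurd (huniq σ hσ a hma (b * (a * g)) g h hg) (hd3t g).symm
        · exact absurd (huniq σ hσ b hmb (b * (a * g)) (a * g) h hcase) (hd2t g).symm
        · exact h
      have hσh2 : σ (b * (a * g)) = g := by
        rw [mul_inv_eq_iff_eq_mul] at hlab2
        rw [hlab2, show c * (b * (a * g)) = c * (b * a) * g by group, hcba1, one_mul]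
      refine ⟨(g, true), ?_⟩
      show cyc3 g (a * g) (b * (a * g)) = σ
      ext w
      by_cases hw1 : w = g
      · rw [hw1, cyc3_fst (hd1 g) (hd2t g), hσg]
      by_cases hw2 : w = a * g
      · rw [hw2, cyc3_snd, hσh1]
      by_cases hw3 : w = b * (a * g)
      · rw [hw3, cyc3_thd (hd2t g) (hd3t g), hσh2]
      rw [cyc3_other hw1 hw2 hw3]
      by_contra hne
      rcases hlab σ hσ w (Ne.symm hne) with h | h | h
      · exact hw1 (huniq σ hσ a hma w g h hg)
      · exact hw2 (huniq σ hσ b hmb w (a * g) h hcase)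
      · exact hw3 (huniq σ hσ c hmc w (b * (a * g)) h hlab2)
    · -- σ (a*g) = c*(a*g) : σ = Φ (g, false)
      have hσh1 : σ (a * g) = c * (a * g) := by rwa [mul_inv_eq_iff_eq_mul] at hcase
      have hne2 : σ (c * (a * g)) ≠ c * (a * g) := by
        intro h
        exact hd2f g (σ.injective (hσh1.trans h.symm))
      have hlab2 : σ (c * (a * g)) * (c * (a * g))⁻¹ = b := by
        rcases hlab σ hσ (c * (a * g)) hne2 with h | h | h
        · exact absurd (huniq σ hσ a hma (c * (a * g)) g h hg) (hd3f g).symm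
        · exact h
        · exact absurd (huniq σ hσ c hmc (c * (a * g)) (a * g) h hcase) (hd2f g).symm
      have hσh2 : σ (c * (a * g)) = g := by
        rw [mul_inv_eq_iff_eq_mul] at hlab2
        rw [hlab2, show b * (c * (a * g)) = b * (c * a) * g by group, hbca1, one_mul]
      refine ⟨(g, false), ?_⟩
      show cyc3 g (a * g) (c * (a * g)) = σ
      ext w
      by_cases hw1 : w = g
      · rw [hw1, cyc3_fst (hd1 g) (hd2f g), hσg]
      by_cases hw2 : w = a * g
      · rw [hw2, cyc3_snd, hσh1]
      by_cases hw3 : w = c * (a * g)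
      · rw [hw3, cyc3_thd (hd2f g) (hd3f g), hσh2]
      rw [cyc3_other hw1 hw2 hw3]
      by_contra hne
      rcases hlab σ hσ w (Ne.symm hne) with h | h | h
      · exact hw1 (huniq σ hσ a hma w g h hg)
      · exact hw3 (huniq σ hσ b hmb w (c * (a * g)) h hlab2)
      · exact hw2 (huniq σ hσ c hmc w (a * g) h hcase)
  -- put everything together
  rw [coeff_groupDet m]
  have hsplit : (∑ σ : Equiv.Perm G, ((Equiv.Perm.sign σ : ℤ) : ℂ) *
      (if permDeg σ = m then 1 else 0)) =
      ∑ σ ∈ univ.filter (fun σ : Equiv.Perm G => permDeg σ = m),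
        ((Equiv.Perm.sign σ : ℤ) : ℂ) := by
    rw [Finset.sum_filter]
    exact Finset.sum_congr rfl fun σ _ => by rw [mul_ite, mul_one, mul_zero]
  rw [hsplit]
  have hset : univ.filter (fun σ : Equiv.Perm G => permDeg σ = m) =
      Finset.image Φ univ := by
    ext σ
    simp only [Finset.mem_filter, Finset.mem_univ, true_and, Finset.mem_image]
    constructor
    · intro hσ
      obtain ⟨p, hp⟩ := hclass σ hσ
      exact ⟨p, hp⟩
    · rintro ⟨p, rfl⟩
      exact hΦdeg p
  rw [hset, Finset.sum_image (fun p _ q _ h => hΦinj p q h)]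
  have hone : ∀ p : G × Bool, ((Equiv.Perm.sign (Φ p) : ℤ) : ℂ) = 1 := by
    rintro ⟨g, β⟩
    cases β
    · show ((Equiv.Perm.sign (cyc3 g (a * g) (c * (a * g))) : ℤ) : ℂ) = 1
      rw [sign_cyc3 (hd1 g) (hd3f g)]; norm_num
    · show ((Equiv.Perm.sign (cyc3 g (a * g) (b * (a * g))) : ℤ) : ℂ) = 1
      rw [sign_cyc3 (hd1 g) (hd3t g)]; norm_num
  rw [Finset.sum_congr rfl fun p _ => hone p, Finset.sum_const, Finset.card_univ,
    Fintype.card_prod, Fintype.card_bool, nsmul_eq_mul, mul_one]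
  push_cast
  ring
end

section
/- Let G be a finite group of order n with identity e and let S be a subset of G. If a monomial x_{a_1} x_{a_2} ⋯ x_{a_n} (with a_1, …, a_n ∈ S, repetitions allowed) occurs in the generalized group determinant Θ_G(S), i.e., has nonzero coefficient, then the elements a_1, …, a_n can be reordered so that their product (with multiplicity) equals e. -/
open MvPolynomial

/-- The generalized group determinant `Θ_G(S)` of a finite group `G` to a subset `S ⊆ G`,
in variables `x_s` (`s ∈ S`), where `x_g = 0` for `g ∈ G \ S`:
`Θ_G(S) = det((x_{g h⁻¹})_{g,h ∈ G})`. -/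
noncomputable def genGroupDet (R G : Type*) [CommRing R] [Group G] [Finite G] (S : Set G) :
    MvPolynomial S R := by
  classical
  letI := Fintype.ofFinite G
  exact Matrix.det (Matrix.of fun g h : G =>
    if hm : g * h⁻¹ ∈ S then MvPolynomial.X (⟨g * h⁻¹, hm⟩ : S) else 0)


private lemma exists_comp_perm_eq {ι α : Type*} [Fintype ι] (u v : ι → α)
    (h : Multiset.map u Finset.univ.val = Multiset.map v Finset.univ.val) :
    ∃ σ : Equiv.Perm ι, ∀ i, v (σ i) = u i := by
  classical
  have key : ∀ b, Fintype.card {i // u i = b} = Fintype.card {i // v i = b} := by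
    intro b
    have hc := congrArg (Multiset.count b) h
    rw [Multiset.count_map, Multiset.count_map] at hc
    rw [Fintype.card_subtype, Fintype.card_subtype]
    simp only [Finset.card, Finset.filter_val]
    simpa [eq_comm] using hc
  let e : ∀ b, {i // u i = b} ≃ {i // v i = b} := fun b => Fintype.equivOfCardEq (key b)
  refine ⟨(Equiv.sigmaFiberEquiv u).symm.trans
    ((Equiv.sigmaCongrRight e).trans (Equiv.sigmaFiberEquiv v)), fun i => ?_⟩
  simp only [Equiv.trans_apply, Equiv.sigmaFiberEquiv]
  exact (e (u i) ((Equiv.sigmaFiberEquiv u).symm i).2).2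

private lemma exists_perm_ofFn {α : Type*} {n : ℕ} (v : Fin n → α) (l : List α)
    (h : (l : Multiset α) = Multiset.map v Finset.univ.val) :
    ∃ σ : Equiv.Perm (Fin n), List.ofFn (fun i => v (σ i)) = l := by
  classical
  have huniv : (Finset.univ.val : Multiset (Fin n)) = ↑(List.finRange n) := by
    rw [Fin.univ_def]
  have hofFn : ∀ w : Fin n → α, ((List.ofFn w : List α) : Multiset α)
      = Multiset.map w Finset.univ.val := by
    intro w
    rw [huniv, List.ofFn_eq_map]
    rfl
  have hlen : l.length = n := by
    have := congrArg Multiset.card h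
    simpa using this
  set u : Fin n → α := fun i => l.get (Fin.cast hlen.symm i) with hu
  have hl : List.ofFn u = l := by
    rw [hu]
    conv_rhs => rw [← List.ofFn_get l]
    exact (List.ofFn_congr hlen l.get).symm
  have : Multiset.map u Finset.univ.val = Multiset.map v Finset.univ.val := by
    rw [← hofFn, hl, h]
  obtain ⟨σ, hσ⟩ := exists_comp_perm_eq u v this
  exact ⟨σ, by rw [funext hσ, hl]⟩

private lemma exists_list_prod_one_aux {G : Type*} [Group G] [DecidableEq G] :
    ∀ (n : ℕ) (s : Finset G) (τ : Equiv.Perm G), s.card = n → (∀ g ∈ s, τ g ∈ s) →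
    ∃ l : List G, (l : Multiset G) = s.val.map (fun g => g * (τ g)⁻¹) ∧ l.prod = 1 := by
  intro n
  induction n with
  | zero =>
    intro s τ hcard _
    rw [Finset.card_eq_zero] at hcard
    subst hcard
    exact ⟨[], by simp, rfl⟩
  | succ n ih =>
    intro s τ hcard hcl
    have hne : s.Nonempty := Finset.card_pos.mp (by omega)
    obtain ⟨g, hg⟩ := hne
    have himg : s.image τ = s := by
      apply Finset.eq_of_subset_of_card_le
      · intro x hx
        obtain ⟨y, hy, rfl⟩ := Finset.mem_image.mp hx
        exact hcl y hy
      · rw [Finset.card_image_of_injective _ τ.injective]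
    have hp : τ.symm g ∈ s := by
      have : g ∈ s.image τ := by rw [himg]; exact hg
      obtain ⟨y, hy, hyg⟩ := Finset.mem_image.mp this
      rwa [show τ.symm g = y from by rw [← hyg]; simp]
    set p := τ.symm g with hpdef
    have hτp : τ p = g := τ.apply_symm_apply g
    have hcard' : (s.erase g).card = n := by
      rw [Finset.card_erase_of_mem hg, hcard]
      omega
    by_cases hfix : τ g = g
    · have hcl' : ∀ h ∈ s.erase g, τ h ∈ s.erase g := by
        intro h hh
        rw [Finset.mem_erase] at hh ⊢
        refine ⟨fun hc => hh.1 (τ.injective (by rw [hc, hfix])), hcl h hh.2⟩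
      obtain ⟨l, hl, hl1⟩ := ih (s.erase g) τ hcard' hcl'
      refine ⟨1 :: l, ?_, by simp [hl1]⟩
      have : s.val = g ::ₘ (s.erase g).val := by
        rw [Finset.erase_val]
        exact (Multiset.cons_erase hg).symm
      rw [this, Multiset.map_cons, ← hl]
      simp [hfix]
    · have hpg : p ≠ g := fun hc => hfix (hc ▸ hτp)
      set τ' : Equiv.Perm G := τ * Equiv.swap g p with hτ'
      have hτ'p : τ' p = τ g := by simp [hτ', Equiv.swap_apply_right]
      have hτ'h : ∀ h, h ≠ g → h ≠ p → τ' h = τ h := by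
        intro h h1 h2
        simp [hτ', Equiv.swap_apply_of_ne_of_ne h1 h2]
      have hcl' : ∀ h ∈ s.erase g, τ' h ∈ s.erase g := by
        intro h hh
        rw [Finset.mem_erase] at hh ⊢
        by_cases h2 : h = p
        · subst h2
          rw [hτ'p]
          exact ⟨hfix, hcl g hg⟩
        · rw [hτ'h h hh.1 h2]
          refine ⟨fun hc => h2 (by rw [hpdef, ← hc]; simp), hcl h hh.2⟩
      obtain ⟨l, hl, hl1⟩ := ih (s.erase g) τ' hcard' hcl'
      have hpel : p ∈ s.erase g := Finset.mem_erase.mpr ⟨hpg, hp⟩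
      have hmem : p * (τ g)⁻¹ ∈ l := by
        rw [← Multiset.mem_coe, hl]
        apply Multiset.mem_map.mpr
        exact ⟨p, Finset.mem_val.mpr hpel, by rw [hτ'p]⟩
      obtain ⟨u, w, rfl⟩ := List.append_of_mem hmem
      have hsep : (s.erase g).val = p ::ₘ ((s.erase g).erase p).val := by
        rw [Finset.erase_val (s.erase g)]
        exact (Multiset.cons_erase (Finset.mem_val.mpr hpel)).symm
      have hs : s.val = g ::ₘ (s.erase g).val := by
        rw [Finset.erase_val]
        exact (Multiset.cons_erase hg).symm
      refine ⟨u ++ (p * g⁻¹) :: (g * (τ g)⁻¹) :: w, ?_, ?_⟩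
      · have ht : ∀ h ∈ ((s.erase g).erase p).val, h * (τ' h)⁻¹ = h * (τ h)⁻¹ := by
          intro h hh
          rw [Finset.mem_val, Finset.mem_erase, Finset.mem_erase] at hh
          rw [hτ'h h hh.2.1 hh.1]
        have hl' : ((s.erase g).val).map (fun g => g * (τ' g)⁻¹)
            = (p * (τ g)⁻¹) ::ₘ (((s.erase g).erase p).val).map (fun g => g * (τ g)⁻¹) := by
          rw [hsep, Multiset.map_cons, hτ'p]
          congr 1
          exact Multiset.map_congr rfl ht
        have huw : ((u ++ w : List G) : Multiset G)
            = (((s.erase g).erase p).val).map (fun g => g * (τ g)⁻¹) := by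
          have h1 : ((u ++ (p * (τ g)⁻¹) :: w : List G) : Multiset G)
              = (p * (τ g)⁻¹) ::ₘ ↑(u ++ w) := by
            rw [Multiset.coe_eq_coe.mpr List.perm_middle, Multiset.cons_coe]
          have h2 := hl
          rw [h1, hl'] at h2
          exact (Multiset.cons_inj_right _).mp h2
        have hLL : ((u ++ (p * g⁻¹) :: (g * (τ g)⁻¹) :: w : List G) : Multiset G)
            = (p * g⁻¹) ::ₘ (g * (τ g)⁻¹) ::ₘ ↑(u ++ w) := by
          have hperm : (u ++ (p * g⁻¹) :: (g * (τ g)⁻¹) :: w).Perm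
              ((p * g⁻¹) :: (g * (τ g)⁻¹) :: (u ++ w)) :=
            List.perm_middle.trans (List.Perm.cons _ List.perm_middle)
          rw [Multiset.coe_eq_coe.mpr hperm, ← Multiset.cons_coe, ← Multiset.cons_coe]
        rw [hLL, hs, hsep]
        simp only [Multiset.map_cons]
        rw [hτp, huw, Multiset.cons_swap]
      · have := hl1
        rw [List.prod_append, List.prod_cons] at this ⊢
        rw [List.prod_cons]
        rw [← this]
        group

private lemma sum_singleton_multiset {ι α : Type*} [Fintype ι] (f : ι → α) :
    ∑ i, ({f i} : Multiset α) = Multiset.map f Finset.univ.val := by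
  rw [Finset.sum]
  rw [show (fun i => ({f i} : Multiset α)) = (fun a => ({a} : Multiset α)) ∘ f from rfl,
    ← Multiset.map_map, Multiset.sum_map_singleton]

private lemma prod_X_eq_monomial' {R ι σs : Type*} [CommSemiring R] (s : Finset ι) (b : ι → σs) :
    ∏ i ∈ s, (X (b i) : MvPolynomial σs R)
      = monomial (∑ i ∈ s, Finsupp.single (b i) 1) (1 : R) := by
  classical
  induction s using Finset.induction with
  | empty => simp
  | insert _ _ h ih =>
    rw [Finset.prod_insert h, Finset.sum_insert h, ih]
    rw [X, monomial_mul, one_mul]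

/-- If a monomial `x_{a 1} ⋯ x_{a n}` (with `n = |G|`, all `a i ∈ S`) occurs in the generalized
group determinant `Θ_G(S)`, then the `a i` can be reordered so that their product is `e`. -/
theorem prod_eq_one_of_coeff_genGroupDet_ne_zero {G : Type*} [Group G] [Fintype G]
    (S : Set G) (a : Fin (Fintype.card G) → S)
    (h : MvPolynomial.coeff (∑ i, Finsupp.single (a i) 1) (genGroupDet ℂ G S) ≠ 0) :
    ∃ σ : Equiv.Perm (Fin (Fintype.card G)),
      (List.ofFn fun i => (a (σ i) : G)).prod = 1 := by
  classical
  set d : S →₀ ℕ := ∑ i, Finsupp.single (a i) 1 with hd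
  have hdet : genGroupDet ℂ G S = Matrix.det (Matrix.of fun g h : G =>
      if hm : g * h⁻¹ ∈ S then (X (⟨g * h⁻¹, hm⟩ : S) : MvPolynomial S ℂ) else 0) := by
    unfold genGroupDet
    congr!
  rw [hdet, Matrix.det_apply] at h
  rw [MvPolynomial.coeff_sum] at h
  obtain ⟨σ, -, hσ⟩ := Finset.exists_ne_zero_of_sum_ne_zero h
  rw [MvPolynomial.coeff_smul] at hσ
  have hprod : MvPolynomial.coeff d
      (∏ i : G, (Matrix.of fun g h : G =>
        if hm : g * h⁻¹ ∈ S then (X (⟨g * h⁻¹, hm⟩ : S) : MvPolynomial S ℂ) else 0) (σ i) i)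
      ≠ 0 := fun h0 => hσ (by rw [h0, smul_zero])
  have hall : ∀ i : G, σ i * i⁻¹ ∈ S := by
    by_contra hc
    push_neg at hc
    obtain ⟨i, hi⟩ := hc
    rw [Finset.prod_eq_zero (Finset.mem_univ i) (by simp [Matrix.of_apply, dif_neg hi])] at hprod
    simp at hprod
  set b : G → S := fun i => ⟨σ i * i⁻¹, hall i⟩ with hb
  have hentry : ∀ i : G, (Matrix.of fun g h : G =>
      if hm : g * h⁻¹ ∈ S then (X (⟨g * h⁻¹, hm⟩ : S) : MvPolynomial S ℂ) else 0) (σ i) i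
      = X (b i) := by
    intro i
    simp [Matrix.of_apply, dif_pos (hall i), hb]
  rw [Finset.prod_congr rfl (fun i _ => hentry i), prod_X_eq_monomial'] at hprod
  rw [MvPolynomial.coeff_monomial] at hprod
  have hdm : d = ∑ i : G, Finsupp.single (b i) 1 := by
    by_contra hne
    exact hprod (if_neg (fun hc => hne hc.symm))
  -- convert to multisets
  have hms : Multiset.map a Finset.univ.val = Multiset.map b Finset.univ.val := by
    have := congrArg Finsupp.toMultiset hdm
    rw [hd] at this
    rw [Finsupp.toMultiset_sum, Finsupp.toMultiset_sum] at this
    simp only [Finsupp.toMultiset_single, one_smul] at this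
    rwa [sum_singleton_multiset, sum_singleton_multiset] at this
  have hmsG : Multiset.map (fun i => ((a i : G))) Finset.univ.val
      = Multiset.map (fun g : G => σ g * g⁻¹) Finset.univ.val := by
    have := congrArg (Multiset.map (Subtype.val : S → G)) hms
    rw [Multiset.map_map, Multiset.map_map] at this
    exact this
  have hreindex : Multiset.map (fun g : G => σ g * g⁻¹) Finset.univ.val
      = Multiset.map (fun g : G => g * (σ⁻¹ g)⁻¹) Finset.univ.val := by
    have huval : Multiset.map (⇑σ) Finset.univ.val = Finset.univ.val := by
      have := congrArg Finset.val (Finset.map_univ_equiv (σ : G ≃ G))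
      simp only [Finset.map_val, Equiv.coe_toEmbedding] at this
      exact this
    have hco : (fun g : G => g * (σ⁻¹ g)⁻¹) ∘ ⇑σ = fun g : G => σ g * g⁻¹ := by
      funext g
      simp
    conv_rhs => rw [← huval, Multiset.map_map, hco]
  obtain ⟨l, hlms, hlprod⟩ := exists_list_prod_one_aux (Fintype.card G) Finset.univ σ⁻¹
    (Finset.card_univ) (fun g _ => Finset.mem_univ _)
  have hfinal : (l : Multiset G) = Multiset.map (fun i => ((a i : G))) Finset.univ.val := by
    rw [hlms, ← hreindex, ← hmsG]
  obtain ⟨σ', hσ'⟩ := exists_perm_ofFn (fun i => ((a i : G))) l hfinal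
  exact ⟨σ', by rw [hσ', hlprod]⟩
end
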